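/- For any nonzero vector g in R^d and a vector e uniformly distributed on the unit Euclidean sphere S^{d-1}, the expectation E_e[sign(⟨g, e⟩) e] is a positive scalar multiple of g/‖g‖; in particular it is parallel to g. -/

import Mathlib

open MeasureTheory
open scoped RealInnerProductSpace

lemma measurable_realSign : Measurable Real.sign := by
  have : Real.sign = fun r : ℝ => if r < 0 then (-1 : ℝ) else if 0 < r then 1 else 0 := by
    funext r; rfl
  rw [this]
  exact Measurable.ite measurableSet_Iio measurable_const
    (Measurable.ite measurableSet_Ioi measurable_const measurable_const)

lemma realSign_abs_le (t : ℝ) : |Real.sign t| ≤ 1 := by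
  rcases Real.sign_apply_eq t with h | h | h <;> rw [h] <;> norm_num

lemma realSign_mul_self (t : ℝ) : Real.sign t * t = |t| := by
  rcases lt_trichotomy t 0 with h | h | h
  · rw [Real.sign_of_neg h, abs_of_neg h]; ring
  · simp [h]
  · rw [Real.sign_of_pos h, abs_of_pos h]; ring

lemma invar {d : ℕ} {F : Type*} [NormedAddCommGroup F] [NormedSpace ℝ F]
    (μ : Measure (EuclideanSpace ℝ (Fin d)))
    (O : EuclideanSpace ℝ (Fin d) ≃ₗᵢ[ℝ] EuclideanSpace ℝ (Fin d))
    (hO : Measure.map (⇑O) μ = μ) (f : EuclideanSpace ℝ (Fin d) → F)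
    (hf : AEStronglyMeasurable f μ) :
    ∫ e, f e ∂μ = ∫ e, f (O e) ∂μ := by
  conv_lhs => rw [← hO]
  exact integral_map O.continuous.aemeasurable (by rwa [hO])

/-- For any nonzero vector `g` in `ℝ^d` and `e` uniformly distributed on the unit
Euclidean sphere (a rotation-invariant probability measure supported on the sphere),
the expectation `E[sign ⟪g, e⟫ • e]` is a positive scalar multiple of `g / ‖g‖`. -/
theorem stmt0 (d : ℕ) (hd : 1 ≤ d) (g : EuclideanSpace ℝ (Fin d)) (hg : g ≠ 0)
    (μ : Measure (EuclideanSpace ℝ (Fin d))) [IsProbabilityMeasure μ]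
    (hsphere : μ {e | ‖e‖ ≠ 1} = 0)
    (hinv : ∀ O : EuclideanSpace ℝ (Fin d) ≃ₗᵢ[ℝ] EuclideanSpace ℝ (Fin d),
      Measure.map (⇑O) μ = μ) :
    ∃ c : ℝ, 0 < c ∧
      (∫ e, Real.sign ⟪g, e⟫ • e ∂μ) = c • (‖g‖⁻¹ • g) := by
  have hae : ∀ᵐ e ∂μ, ‖e‖ = 1 := by
    rw [MeasureTheory.ae_iff]
    exact hsphere
  -- measurability of the integrand
  have hmg : ∀ w : EuclideanSpace ℝ (Fin d), Measurable fun e : EuclideanSpace ℝ (Fin d) => ⟪w, e⟫ := fun w =>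
    (continuous_const.inner continuous_id).measurable
  have hmsign : Measurable fun e : EuclideanSpace ℝ (Fin d) => Real.sign ⟪g, e⟫ :=
    measurable_realSign.comp (hmg g)
  have hsm : AEStronglyMeasurable (fun e : EuclideanSpace ℝ (Fin d) => Real.sign ⟪g, e⟫ • e) μ :=
    (hmsign.smul measurable_id).aestronglyMeasurable
  have hint : Integrable (fun e : EuclideanSpace ℝ (Fin d) => Real.sign ⟪g, e⟫ • e) μ := by
    refine Integrable.mono' (integrable_const 1) hsm ?_
    filter_upwards [hae] with e he
    rw [norm_smul, he, mul_one, Real.norm_eq_abs]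
    exact realSign_abs_le _
  set I := ∫ e, Real.sign ⟪g, e⟫ • e ∂μ with hI
  -- I is fixed by every isometry fixing g
  have hfix : ∀ O : EuclideanSpace ℝ (Fin d) ≃ₗᵢ[ℝ] EuclideanSpace ℝ (Fin d), O g = g → O I = I := by
    intro O hOg
    have h1 : I = ∫ e, Real.sign ⟪g, O e⟫ • (O e) ∂μ :=
      invar μ O (hinv O) _ hsm
    have h2 : (fun e : EuclideanSpace ℝ (Fin d) => Real.sign ⟪g, O e⟫ • (O e)) =
        fun e : EuclideanSpace ℝ (Fin d) => O.toLinearIsometry (Real.sign ⟪g, e⟫ • e) := by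
      funext e
      have : ⟪g, O e⟫ = ⟪g, e⟫ := by
        conv_lhs => rw [← hOg]
        exact O.inner_map_map g e
      simp [this, _root_.map_smul]
    rw [h2, O.toLinearIsometry.integral_comp_comm] at h1
    exact h1.symm
  -- hence I is orthogonal to everything orthogonal to g
  have horth : ∀ w ∈ (ℝ ∙ g)ᗮ, ⟪w, I⟫ = 0 := by
    intro w hw
    have hgw : ⟪g, w⟫ = 0 := hw g (Submodule.mem_span_singleton_self g)
    set O := Submodule.reflection (ℝ ∙ w)ᗮ with hO
    have hOg : O g = g := by
      refine Submodule.reflection_mem_subspace_eq_self ?_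
      rw [Submodule.mem_orthogonal_singleton_iff_inner_right, real_inner_comm]
      exact hgw
    have hOw : O w = -w :=
      Submodule.reflection_mem_subspace_orthogonal_precomplement_eq_neg
        (Submodule.mem_span_singleton_self w)
    have hIf := hfix O hOg
    have h5 : ⟪w, I⟫ = ⟪O w, O I⟫ := (O.inner_map_map w I).symm
    rw [hOw, hIf, inner_neg_left] at h5
    linarith
  have hImem : I ∈ ℝ ∙ g := by
    rw [← Submodule.orthogonal_orthogonal (ℝ ∙ g)]
    exact (Submodule.mem_orthogonal _ _).mpr horth
  obtain ⟨a, ha⟩ := Submodule.mem_span_singleton.mp hImem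
  -- compute ⟪g, I⟫ as the integral of |⟪g,e⟫|
  have hgI : ⟪g, I⟫ = ∫ e, |⟪g, e⟫| ∂μ := by
    rw [hI, ← integral_inner hint g]
    congr 1
    funext e
    rw [real_inner_smul_right, realSign_mul_self]
  -- show the integral of |⟪g,e⟫| is positive
  have habs_int : Integrable (fun e : EuclideanSpace ℝ (Fin d) => |⟪g, e⟫|) μ := by
    refine Integrable.mono' (integrable_const ‖g‖) ((hmg g).abs.aestronglyMeasurable) ?_
    filter_upwards [hae] with e he
    rw [Real.norm_eq_abs, abs_abs]
    calc |⟪g, e⟫| ≤ ‖g‖ * ‖e‖ := abs_real_inner_le_norm g e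
      _ = ‖g‖ := by rw [he, mul_one]
  set v : EuclideanSpace ℝ (Fin d) := ‖g‖⁻¹ • g with hv
  have hvnorm : ‖v‖ = 1 := norm_smul_inv_norm hg
  have hsq_int : ∀ w : EuclideanSpace ℝ (Fin d), ‖w‖ = 1 → Integrable (fun e : EuclideanSpace ℝ (Fin d) => ⟪w, e⟫ ^ 2) μ := by
    intro w hw
    refine Integrable.mono' (integrable_const 1) ((hmg w).pow_const 2).aestronglyMeasurable ?_
    filter_upwards [hae] with e he
    rw [Real.norm_eq_abs, abs_pow, ← abs_one (α := ℝ)]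
    rw [abs_one]
    calc |⟪w, e⟫| ^ 2 ≤ (‖w‖ * ‖e‖) ^ 2 :=
          pow_le_pow_left₀ (abs_nonneg _) (abs_real_inner_le_norm w e) 2
      _ = 1 := by rw [hw, he]; norm_num
  -- the second moment in any unit direction equals that in direction v
  have hsame : ∀ w : EuclideanSpace ℝ (Fin d), ‖w‖ = 1 → ∫ e, ⟪w, e⟫ ^ 2 ∂μ = ∫ e, ⟪v, e⟫ ^ 2 ∂μ := by
    intro w hw
    set O := Submodule.reflection (ℝ ∙ (v - w))ᗮ with hO
    have hOv : O v = w := Submodule.reflection_sub (by rw [hvnorm, hw])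
    have h1 : ∫ e, ⟪w, e⟫ ^ 2 ∂μ = ∫ e, ⟪w, O e⟫ ^ 2 ∂μ :=
      invar μ O (hinv O) _ ((hmg w).pow_const 2).aestronglyMeasurable
    have h2 : ∀ e : EuclideanSpace ℝ (Fin d), ⟪w, O e⟫ = ⟪v, e⟫ := by
      intro e
      conv_lhs => rw [← hOv]
      exact O.inner_map_map v e
    rw [h1]
    congr 1
    funext e
    rw [h2]
  -- sum over directions gives 1
  have hbasis : ∀ e : EuclideanSpace ℝ (Fin d), ∑ i : Fin d, ⟪EuclideanSpace.single i (1 : ℝ), e⟫ ^ 2 = ‖e‖ ^ 2 := by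
    intro e
    rw [← real_inner_self_eq_norm_sq, PiLp.inner_apply]
    congr 1
    funext i
    rw [EuclideanSpace.inner_single_left]
    simp [sq]
  have hunit : ∀ i : Fin d, ‖(EuclideanSpace.single i (1 : ℝ) : EuclideanSpace ℝ (Fin d))‖ = 1 := by
    intro i
    rw [EuclideanSpace.norm_single]
    norm_num
  have hsum : ∑ i : Fin d, ∫ e, ⟪EuclideanSpace.single i (1 : ℝ), e⟫ ^ 2 ∂μ = 1 := by
    rw [← integral_finset_sum _ (fun i _ => hsq_int _ (hunit i))]
    have : ∫ e, (∑ i : Fin d, ⟪EuclideanSpace.single i (1 : ℝ), e⟫ ^ 2) ∂μ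
        = ∫ (_ : EuclideanSpace ℝ (Fin d)), (1 : ℝ) ∂μ := by
      refine integral_congr_ae ?_
      filter_upwards [hae] with e he
      rw [hbasis e, he]
      norm_num
    rw [this, integral_const]
    simp
  have hT : ∫ e, ⟪v, e⟫ ^ 2 ∂μ = 1 / d := by
    have : ∑ i : Fin d, ∫ e, ⟪EuclideanSpace.single i (1 : ℝ), e⟫ ^ 2 ∂μ
        = (d : ℝ) * ∫ e, ⟪v, e⟫ ^ 2 ∂μ := by
      rw [Finset.sum_congr rfl (fun i _ => hsame _ (hunit i))]
      simp [Finset.sum_const, nsmul_eq_mul]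
    rw [this] at hsum
    have hd0 : (d : ℝ) ≠ 0 := Nat.cast_ne_zero.mpr (by omega)
    field_simp at hsum ⊢
    linarith
  -- positivity of ∫ |⟪g,e⟫|
  have hpos : 0 < ∫ e, |⟪g, e⟫| ∂μ := by
    rcases lt_or_eq_of_le (integral_nonneg (fun e => abs_nonneg _) :
        (0 : ℝ) ≤ ∫ e, |⟪g, e⟫| ∂μ) with h | h
    · exact h
    · exfalso
      have hz : (fun e : EuclideanSpace ℝ (Fin d) => |⟪g, e⟫|) =ᵐ[μ] 0 :=
        (integral_eq_zero_iff_of_nonneg_ae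
          (Filter.Eventually.of_forall fun e => abs_nonneg _) habs_int).mp h.symm
      have hvz : (fun e : EuclideanSpace ℝ (Fin d) => ⟪v, e⟫ ^ 2) =ᵐ[μ] 0 := by
        filter_upwards [hz] with e he
        have : |⟪g, e⟫| = 0 := he
        have hge : ⟪g, e⟫ = 0 := abs_eq_zero.mp this
        show ⟪v, e⟫ ^ 2 = 0
        rw [hv, real_inner_smul_left, hge]
        ring
      have : ∫ e, ⟪v, e⟫ ^ 2 ∂μ = 0 := by
        rw [integral_congr_ae hvz]; simp
      rw [hT] at this
      have hd0 : (0 : ℝ) < d := by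
        exact_mod_cast Nat.lt_of_lt_of_le Nat.zero_lt_one hd
      rw [div_eq_zero_iff] at this
      rcases this with h1 | h1
      · exact one_ne_zero h1
      · exact hd0.ne' h1
  -- conclude
  have hgI2 : ⟪g, I⟫ = a * ‖g‖ ^ 2 := by
    rw [← ha, real_inner_smul_right, real_inner_self_eq_norm_sq]
  have hgn : (0 : ℝ) < ‖g‖ := norm_pos_iff.mpr hg
  have hapos : 0 < a := by
    have h0 : 0 < a * ‖g‖ ^ 2 := by rw [← hgI2, hgI]; exact hpos
    nlinarith [sq_nonneg ‖g‖]
  refine ⟨a * ‖g‖, mul_pos hapos hgn, ?_⟩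
  rw [smul_smul, mul_assoc, mul_inv_cancel₀ hgn.ne', mul_one, ha]
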